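/- For every integer n > 1, the determining index of the complete bipartite graph K_{n,n} satisfies det'(K_{n,n}) = n. -/

import Mathlib

/-- `S` is a vertex determining set of `G`: the only automorphism of `G`
fixing every vertex of `S` is the identity. -/
def IsVertexDetSet {V : Type*} (G : SimpleGraph V) (S : Set V) : Prop :=
  ∀ φ : G ≃g G, (∀ v ∈ S, φ v = v) → ∀ w, φ w = w

/-- `T` is an edge determining set of `G`: `T` consists of edges of `G`, and the only
automorphism of `G` mapping each edge of `T` to itself (as an unordered pair) is the identity. -/
def IsEdgeDetSet {V : Type*} (G : SimpleGraph V) (T : Set (Sym2 V)) : Prop :=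
  T ⊆ G.edgeSet ∧ ∀ φ : G ≃g G, (∀ e ∈ T, Sym2.map φ e = e) → ∀ w, φ w = w

/-- The determining number `det(G)`: the minimum size of a vertex determining set. -/
noncomputable def detNum {V : Type*} (G : SimpleGraph V) : ℕ :=
  sInf {k | ∃ S : Finset V, S.card = k ∧ IsVertexDetSet G ↑S}

/-- The determining index `det'(G)`: the minimum size of an edge determining set. -/
noncomputable def detIndex {V : Type*} (G : SimpleGraph V) : ℕ :=
  sInf {k | ∃ T : Finset (Sym2 V), T.card = k ∧ IsEdgeDetSet G ↑T}


open Sum in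
private abbrev KB (n : ℕ) := completeBipartiteGraph (Fin n) (Fin n)

open Sum
def permAut {n : ℕ} (σ τ : Equiv.Perm (Fin n)) : KB n ≃g KB n :=
  { toEquiv := Equiv.sumCongr σ τ
    map_rel_iff' := by intro a b; cases a <;> cases b <;> simp [completeBipartiteGraph] }

def swapAut {n : ℕ} (σ : Equiv.Perm (Fin n)) : KB n ≃g KB n :=
  { toEquiv := (Equiv.sumCongr σ σ.symm).trans (Equiv.sumComm _ _)
    map_rel_iff' := by intro a b; cases a <;> cases b <;> simp [completeBipartiteGraph] }

theorem edge_form {n : ℕ} (e : Sym2 (Fin n ⊕ Fin n)) (he : e ∈ (KB n).edgeSet) :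
    ∃ a b, e = s(inl a, inr b) := by
  induction e with
  | _ u v =>
    rw [SimpleGraph.mem_edgeSet] at he
    cases u with
    | inl a => cases v with
      | inl b => simp [completeBipartiteGraph] at he
      | inr b => exact ⟨a, b, rfl⟩
    | inr a => cases v with
      | inl b => exact ⟨b, a, Sym2.eq_swap⟩
      | inr b => simp [completeBipartiteGraph] at he

def lFun {n : ℕ} [NeZero n] : (Fin n ⊕ Fin n) → (Fin n ⊕ Fin n) → Fin n
  | inl a, inl b => min a b
  | inl a, inr _ => a
  | inr _, inl b => b
  | inr _, inr _ => 0

def rFun {n : ℕ} [NeZero n] : (Fin n ⊕ Fin n) → (Fin n ⊕ Fin n) → Fin n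
  | inl _, inl _ => 0
  | inl _, inr b => b
  | inr a, inl _ => a
  | inr a, inr b => min a b

def lOf {n : ℕ} [NeZero n] : Sym2 (Fin n ⊕ Fin n) → Fin n :=
  Sym2.lift ⟨lFun, by intro x y; cases x <;> cases y <;> simp [lFun, min_comm]⟩

def rOf {n : ℕ} [NeZero n] : Sym2 (Fin n ⊕ Fin n) → Fin n :=
  Sym2.lift ⟨rFun, by intro x y; cases x <;> cases y <;> simp [rFun, min_comm]⟩

@[simp] theorem lOf_pair {n : ℕ} [NeZero n] (a b : Fin n) : lOf s(inl a, inr b) = a := rfl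
@[simp] theorem rOf_pair {n : ℕ} [NeZero n] (a b : Fin n) : rOf s(inl a, inr b) = b := rfl

theorem edge_decomp {n : ℕ} [NeZero n] (e : Sym2 (Fin n ⊕ Fin n)) (he : e ∈ (KB n).edgeSet) :
    e = s(inl (lOf e), inr (rOf e)) := by
  obtain ⟨a, b, rfl⟩ := edge_form e he
  rw [lOf_pair, rOf_pair]

theorem lower (n : ℕ) (hn : 1 < n) (T : Finset (Sym2 (Fin n ⊕ Fin n)))
    (hT : IsEdgeDetSet (KB n) ↑T) : n ≤ T.card := by
  classical
  haveI : NeZero n := ⟨by omega⟩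
  by_contra hlt
  push_neg at hlt
  obtain ⟨hsub, hdet⟩ := hT
  have hED : ∀ e ∈ T, e = s(inl (lOf e), inr (rOf e)) := fun e he =>
    edge_decomp e (hsub he)
  set L : Finset (Fin n) := T.image lOf with hLdef
  set R : Finset (Fin n) := T.image rOf with hRdef
  have hLcard : L.card ≤ T.card := Finset.card_image_le
  have hRcard : R.card ≤ T.card := Finset.card_image_le
  by_cases hA : L.card + 1 < n
  · -- two vertices outside L: swap them on the left
    have h2 : 1 < Lᶜ.card := by
      rw [Finset.card_compl, Fintype.card_fin]; omega
    obtain ⟨a, ha, b, hb, hab⟩ := Finset.one_lt_card.mp h2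
    rw [Finset.mem_compl] at ha hb
    set φ := permAut (Equiv.swap a b) 1 with hφ
    have hfix : ∀ e ∈ (↑T : Set (Sym2 (Fin n ⊕ Fin n))), Sym2.map φ e = e := by
      intro e he
      rw [Finset.mem_coe] at he
      have hxa : lOf e ≠ a := fun h => ha (h ▸ Finset.mem_image_of_mem lOf he)
      have hxb : lOf e ≠ b := fun h => hb (h ▸ Finset.mem_image_of_mem lOf he)
      have h1 : φ (inl (lOf e)) = inl ((Equiv.swap a b) (lOf e)) := rfl
      rw [Equiv.swap_apply_of_ne_of_ne hxa hxb] at h1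
      have h2 : φ (inr (rOf e)) = inr (rOf e) := rfl
      conv_lhs => rw [hED e he]
      rw [Sym2.map_pair_eq, h1, h2]
      exact (hED e he).symm
    have := hdet φ hfix (inl a)
    have hc : (inl ((Equiv.swap a b) a) : Fin n ⊕ Fin n) = inl a := this
    rw [Equiv.swap_apply_left] at hc
    exact hab (Sum.inl.inj hc).symm
  by_cases hB : R.card + 1 < n
  · have h2 : 1 < Rᶜ.card := by
      rw [Finset.card_compl, Fintype.card_fin]; omega
    obtain ⟨a, ha, b, hb, hab⟩ := Finset.one_lt_card.mp h2
    rw [Finset.mem_compl] at ha hb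
    set φ := permAut 1 (Equiv.swap a b) with hφ
    have hfix : ∀ e ∈ (↑T : Set (Sym2 (Fin n ⊕ Fin n))), Sym2.map φ e = e := by
      intro e he
      rw [Finset.mem_coe] at he
      have hxa : rOf e ≠ a := fun h => ha (h ▸ Finset.mem_image_of_mem rOf he)
      have hxb : rOf e ≠ b := fun h => hb (h ▸ Finset.mem_image_of_mem rOf he)
      have h1 : φ (inl (lOf e)) = inl (lOf e) := rfl
      have h2 : φ (inr (rOf e)) = inr ((Equiv.swap a b) (rOf e)) := rfl
      rw [Equiv.swap_apply_of_ne_of_ne hxa hxb] at h2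
      conv_lhs => rw [hED e he]
      rw [Sym2.map_pair_eq, h1, h2]
      exact (hED e he).symm
    have := hdet φ hfix (inr a)
    have hc : (inr ((Equiv.swap a b) a) : Fin n ⊕ Fin n) = inr a := this
    rw [Equiv.swap_apply_left] at hc
    exact hab (Sum.inr.inj hc).symm
  -- Case C: T is a near-perfect matching
  push_neg at hA hB
  have hLT : L.card = T.card := le_antisymm hLcard (by omega)
  have hRT : R.card = T.card := le_antisymm hRcard (by omega)
  have hLinj : Set.InjOn (lOf (n := n)) ↑T := Finset.card_image_iff.mp hLT
  have hRinj : Set.InjOn (rOf (n := n)) ↑T := Finset.card_image_iff.mp hRT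
  have hLc1 : Lᶜ.card = 1 := by rw [Finset.card_compl, Fintype.card_fin]; omega
  have hRc1 : Rᶜ.card = 1 := by rw [Finset.card_compl, Fintype.card_fin]; omega
  obtain ⟨a0, ha0⟩ := Finset.card_eq_one.mp hLc1
  obtain ⟨b0, hb0⟩ := Finset.card_eq_one.mp hRc1
  set m : Fin n → Fin n := fun x =>
    if hx : x ∈ L then rOf (Finset.mem_image.mp hx).choose else b0 with hm
  have hmspec : ∀ e ∈ T, m (lOf e) = rOf e := by
    intro e he
    have hx : lOf e ∈ L := Finset.mem_image_of_mem lOf he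
    rw [hm]
    simp only [dif_pos hx]
    obtain ⟨he', hle'⟩ := (Finset.mem_image.mp hx).choose_spec
    rw [hLinj he' he hle']
  have hmR : ∀ x ∈ L, m x ∈ R := by
    intro x hx
    obtain ⟨e, he, rfl⟩ := Finset.mem_image.mp hx
    rw [hmspec e he]
    exact Finset.mem_image_of_mem rOf he
  have hmb0 : ∀ x, x ∉ L → m x = b0 := by
    intro x hx; rw [hm]; simp [dif_neg hx]
  have hb0R : b0 ∉ R := by
    have : b0 ∈ Rᶜ := by rw [hb0]; exact Finset.mem_singleton_self b0
    exact Finset.mem_compl.mp this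
  have hminj : Function.Injective m := by
    intro x x' hxx'
    by_cases hx : x ∈ L <;> by_cases hx' : x' ∈ L
    · obtain ⟨e, he, rfl⟩ := Finset.mem_image.mp hx
      obtain ⟨e', he', rfl⟩ := Finset.mem_image.mp hx'
      rw [hmspec e he, hmspec e' he'] at hxx'
      rw [hRinj he he' hxx']
    · exact absurd ((hmb0 x' hx') ▸ hxx' ▸ hmR x hx) hb0R
    · exact absurd ((hmb0 x hx) ▸ hxx'.symm ▸ hmR x' hx') hb0R
    · have h1 : x ∈ Lᶜ := Finset.mem_compl.mpr hx
      have h2 : x' ∈ Lᶜ := Finset.mem_compl.mpr hx'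
      rw [ha0, Finset.mem_singleton] at h1 h2
      rw [h1, h2]
  set σ := Equiv.ofBijective m (Finite.injective_iff_bijective.mp hminj) with hσ
  have hσap : ∀ x, σ x = m x := fun x => rfl
  set φ := swapAut σ with hφ
  have hfix : ∀ e ∈ (↑T : Set (Sym2 (Fin n ⊕ Fin n))), Sym2.map φ e = e := by
    intro e he
    rw [Finset.mem_coe] at he
    have hσe : σ (lOf e) = rOf e := (hσap _).trans (hmspec e he)
    have hσsymm : σ.symm (rOf e) = lOf e := by
      rw [Equiv.symm_apply_eq, hσe]
    have h1 : φ (inl (lOf e)) = inr (σ (lOf e)) := rfl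
    rw [hσe] at h1
    have h2 : φ (inr (rOf e)) = inl (σ.symm (rOf e)) := rfl
    rw [hσsymm] at h2
    conv_lhs => rw [hED e he]
    rw [Sym2.map_pair_eq, h1, h2, Sym2.eq_swap]
    exact (hED e he).symm
  have := hdet φ hfix (inl 0)
  have hc : (inr (σ 0) : Fin n ⊕ Fin n) = inl 0 := this
  exact Sum.inr_ne_inl hc

def detEdges (n : ℕ) [NeZero n] : Fin n → Sym2 (Fin n ⊕ Fin n) :=
  fun i => if i = 0 then s(inl 0, inr 1) else s(inl i, inr i)

theorem upper (n : ℕ) (hn : 1 < n) :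
    ∃ T : Finset (Sym2 (Fin n ⊕ Fin n)), T.card = n ∧ IsEdgeDetSet (KB n) ↑T := by
  haveI : NeZero n := ⟨by omega⟩
  have h10 : (1 : Fin n) ≠ 0 := by
    simp [Fin.ext_iff, Fin.val_one', Nat.mod_eq_of_lt hn]
  refine ⟨Finset.image (detEdges n) Finset.univ, ?_, ?_, ?_⟩
  · rw [Finset.card_image_of_injective _ ?_, Finset.card_univ, Fintype.card_fin]
    intro i j hij
    unfold detEdges at hij
    by_cases hi : i = 0 <;> by_cases hj : j = 0
    · rw [hi, hj]
    · rw [if_pos hi, if_neg hj, Sym2.eq_iff] at hij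
      rcases hij with ⟨h, -⟩ | ⟨h, -⟩
      · exact absurd (Sum.inl.inj h).symm hj
      · exact absurd h (by simp)
    · rw [if_neg hi, if_pos hj, Sym2.eq_iff] at hij
      rcases hij with ⟨h, -⟩ | ⟨h, -⟩
      · exact absurd (Sum.inl.inj h) hi
      · exact absurd h (by simp)
    · rw [if_neg hi, if_neg hj, Sym2.eq_iff] at hij
      rcases hij with ⟨h, -⟩ | ⟨h, -⟩
      · exact Sum.inl.inj h
      · exact absurd h (by simp)
  · intro e he
    simp only [Finset.coe_image, Set.mem_image] at he
    obtain ⟨i, -, rfl⟩ := he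
    unfold detEdges
    split <;> simp [SimpleGraph.mem_edgeSet, completeBipartiteGraph]
  · intro φ hfix
    have key : ∀ i : Fin n, i ≠ 0 →
        (φ (inl i) = inl i ∧ φ (inr i) = inr i) ∨ (φ (inl i) = inr i ∧ φ (inr i) = inl i) := by
      intro i hi
      have h := hfix (detEdges n i) (by simp)
      unfold detEdges at h
      rw [if_neg hi] at h
      simpa [Sym2.eq_iff] using h
    have key0 : (φ (inl 0) = inl 0 ∧ φ (inr 1) = inr 1) ∨
        (φ (inl 0) = inr 1 ∧ φ (inr 1) = inl 0) := by
      have h := hfix (detEdges n 0) (by simp)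
      unfold detEdges at h
      rw [if_pos rfl] at h
      simpa [Sym2.eq_iff] using h
    have h1 := key 1 h10
    have hr1 : φ (inr 1) = inr 1 := by
      rcases h1 with ⟨-, h⟩ | ⟨-, h⟩
      · exact h
      · rcases key0 with ⟨-, h'⟩ | ⟨-, h'⟩
        · exact h'
        · exact absurd (h.symm.trans h') (by simp [h10])
    have hl0 : φ (inl 0) = inl 0 := by
      rcases key0 with ⟨h, -⟩ | ⟨-, h'⟩
      · exact h
      · exact absurd (hr1.symm.trans h') (by simp)
    have hall : ∀ i : Fin n, φ (inl i) = inl i ∧ (i ≠ 0 → φ (inr i) = inr i) := by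
      intro i
      by_cases hi : i = 0
      · exact ⟨hi ▸ hl0, fun h => absurd hi h⟩
      rcases key i hi with ⟨h1, h2⟩ | ⟨h1, h2⟩
      · exact ⟨h1, fun _ => h2⟩
      · exfalso
        have hadj : (KB n).Adj (φ (inl i)) (φ (inl 0)) ↔ (KB n).Adj (inl i) (inl 0) :=
          φ.map_rel_iff
        rw [h1, hl0] at hadj
        simp [completeBipartiteGraph] at hadj
    have hr0 : φ (inr 0) = inr 0 := by
      rcases h : φ (inr 0) with j | j
      · exact absurd (φ.injective (h.trans ((hall j).1).symm)) (by simp)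
      · by_cases hj : j = 0
        · rw [hj]
        · have := φ.injective (h.trans (((hall j).2 hj)).symm)
          simp only [Sum.inr.injEq] at this
          exact absurd this.symm hj
    intro w
    rcases w with i | i
    · exact (hall i).1
    · by_cases hi : i = 0
      · exact hi ▸ hr0
      · exact (hall i).2 hi

theorem detIndex_completeBipartite_eq (n : ℕ) (hn : 1 < n) :
    detIndex (completeBipartiteGraph (Fin n) (Fin n)) = n := by
  obtain ⟨T, hcard, hdet⟩ := upper n hn
  refine le_antisymm (Nat.sInf_le ⟨T, hcard, hdet⟩) (le_csInf ⟨n, T, hcard, hdet⟩ ?_)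
  rintro k ⟨T', rfl, hd⟩
  exact lower n hn T' hd
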